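/- arXiv:2004.04454 — 3 statements merged into one kernel-verified Lean document; each statement's English description precedes it below -/
import Mathlib

section
/- Let S be a real symmetric p×p matrix with eigenvalues λ₁ ≥ λ₂ ≥ … ≥ λ_p (counted with multiplicity). Then for every real p×q matrix B with BᵀB = I_q, trace(Bᵀ S B) ≤ λ₁ + λ₂ + … + λ_q. -/
open Matrix

/-- Ky Fan upper bound: for a real symmetric `S` with eigenvalues arranged in
nonincreasing order and any `B` with orthonormal columns,
`trace(Bᵀ S B) ≤ λ₁ + ⋯ + λ_q`. -/
theorem stmt13 (p q : ℕ) (hq : q ≤ p) (S : Matrix (Fin p) (Fin p) ℝ)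
    (hS : S.IsHermitian)
    (hmono : ∀ i j : Fin p, i ≤ j → hS.eigenvalues j ≤ hS.eigenvalues i)
    (B : Matrix (Fin p) (Fin q) ℝ) (hB : Bᵀ * B = 1) :
    (Bᵀ * S * B).trace ≤ ∑ j : Fin q, hS.eigenvalues (Fin.castLE hq j) := by
  classical
  set lam := hS.eigenvalues with hlam
  set U : Matrix (Fin p) (Fin p) ℝ := (hS.eigenvectorUnitary : Matrix (Fin p) (Fin p) ℝ)
    with hUdef
  have hstar : ∀ {m n : Type} [Fintype m] [Fintype n] (M : Matrix m n ℝ), Mᴴ = Mᵀ := by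
    intro m n _ _ M; ext i j; simp [conjTranspose_apply]
  have hUU : U * Uᵀ = 1 := by
    have := (Matrix.mem_unitaryGroup_iff).mp hS.eigenvectorUnitary.2
    rwa [star_eq_conjTranspose, hstar] at this
  have hUU' : Uᵀ * U = 1 := by
    have := (Matrix.mem_unitaryGroup_iff').mp hS.eigenvectorUnitary.2
    rwa [star_eq_conjTranspose, hstar] at this
  set C : Matrix (Fin p) (Fin q) ℝ := Uᵀ * B with hCdef
  have hCC : Cᵀ * C = 1 := by
    rw [hCdef, transpose_mul, transpose_transpose, ← Matrix.mul_assoc, Matrix.mul_assoc Bᵀ U Uᵀ, hUU,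
      Matrix.mul_one, hB]
  set r : Fin p → ℝ := fun i => ∑ j : Fin q, C i j ^ 2 with hrdef
  have hdiag : S = U * diagonal lam * Uᵀ := by
    have := hS.spectral_theorem
    rw [Unitary.conjStarAlgAut_apply, star_eq_conjTranspose, hstar] at this
    exact this
  have key : (Bᵀ * S * B).trace = ∑ i : Fin p, lam i * r i := by
    have hBS : Bᵀ * S * B = Cᵀ * diagonal lam * C := by
      rw [hdiag, hCdef, transpose_mul, transpose_transpose]
      simp only [Matrix.mul_assoc]
    rw [hBS]
    simp only [Matrix.trace, Matrix.diag, Matrix.mul_apply, Matrix.transpose_apply,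
      Matrix.diagonal_apply, Finset.sum_ite_eq, Finset.mem_univ, if_true]
    rw [Finset.sum_comm]
    apply Finset.sum_congr rfl
    intro i _
    rw [hrdef, Finset.mul_sum]
    apply Finset.sum_congr rfl
    intro j _
    simp [Finset.mul_sum, Finset.sum_ite_eq, pow_two]
    ring
  have hr0 : ∀ i, 0 ≤ r i := fun i => Finset.sum_nonneg fun j _ => sq_nonneg _
  have hrsum : ∑ i, r i = (q : ℝ) := by
    rw [hrdef]
    rw [Finset.sum_comm]
    have : ∀ j : Fin q, ∑ i : Fin p, C i j ^ 2 = 1 := by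
      intro j
      have := congrFun (congrFun hCC j) j
      simp only [Matrix.mul_apply, Matrix.transpose_apply, Matrix.one_apply_eq] at this
      rw [← this]
      apply Finset.sum_congr rfl
      intro i _
      ring
    simp [this]
  have hr1 : ∀ i, r i ≤ 1 := by
    intro i
    set P : Matrix (Fin p) (Fin p) ℝ := C * Cᵀ with hPdef
    have hPsymm : Pᵀ = P := by rw [hPdef, transpose_mul, transpose_transpose]
    have hPP : P * P = P := by
      rw [hPdef, ← Matrix.mul_assoc, Matrix.mul_assoc C Cᵀ C, hCC, Matrix.mul_one]
    have hPii : P i i = r i := by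
      simp only [hPdef, Matrix.mul_apply, Matrix.transpose_apply, hrdef]
      apply Finset.sum_congr rfl
      intro j _
      ring
    have hsq : P i i = ∑ j, P i j ^ 2 := by
      conv_lhs => rw [← hPP]
      simp only [Matrix.mul_apply]
      apply Finset.sum_congr rfl
      intro j _
      have : P j i = P i j := by
        conv_lhs => rw [← hPsymm]
        simp [Matrix.transpose_apply]
      rw [this]; ring
    have h1 : P i i ^ 2 ≤ P i i :=
      calc P i i ^ 2 ≤ ∑ j, P i j ^ 2 :=
            Finset.single_le_sum (f := fun j => P i j ^ 2) (fun j _ => sq_nonneg _)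
              (Finset.mem_univ i)
        _ = P i i := hsq.symm
    rw [← hPii]
    nlinarith [hr0 i, hPii]
  rw [key]
  rcases Nat.eq_zero_or_pos q with hq0 | hqpos
  · subst hq0
    have : ∀ i, r i = 0 := by intro i; rw [hrdef]; simp
    simp [this]
  · set t : ℝ := lam ⟨q - 1, by omega⟩ with htdef
    have hle : ∀ i : Fin p, (i : ℕ) < q → t ≤ lam i := by
      intro i hi
      exact hmono i ⟨q - 1, by omega⟩ (by simp [Fin.le_def]; omega)
    have hge : ∀ i : Fin p, q ≤ (i : ℕ) → lam i ≤ t := by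
      intro i hi
      exact hmono ⟨q - 1, by omega⟩ i (by simp [Fin.le_def]; omega)
    have step1 : ∑ i : Fin p, lam i * r i
        = ∑ i : Fin p, (lam i - t) * r i + t * q := by
      have : ∀ i : Fin p, lam i * r i = (lam i - t) * r i + t * r i := by
        intro i; ring
      simp_rw [this]
      rw [Finset.sum_add_distrib, ← Finset.mul_sum, hrsum]
    have step2 : ∑ j : Fin q, lam (Fin.castLE hq j)
        = ∑ j : Fin q, (lam (Fin.castLE hq j) - t) + t * q := by
      rw [Finset.sum_sub_distrib, Finset.sum_const, Finset.card_univ, Fintype.card_fin,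
        nsmul_eq_mul]
      ring
    rw [step1, step2]
    have main : ∑ i : Fin p, (lam i - t) * r i ≤ ∑ j : Fin q, (lam (Fin.castLE hq j) - t) := by
      have hbound : ∑ i : Fin p, (lam i - t) * r i
          ≤ ∑ i : Fin p, (if (i : ℕ) < q then lam i - t else 0) := by
        apply Finset.sum_le_sum
        intro i _
        by_cases hi : (i : ℕ) < q
        · rw [if_pos hi]
          have h1 := hle i hi
          have h2 := hr1 i
          have h3 := hr0 i
          nlinarith
        · rw [if_neg hi]
          have h1 := hge i (by omega)
          have h3 := hr0 i
          nlinarith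
      have heq : ∑ i : Fin p, (if (i : ℕ) < q then lam i - t else 0)
          = ∑ j : Fin q, (lam (Fin.castLE hq j) - t) := by
        rw [← Finset.sum_filter]
        rw [show (Finset.univ.filter fun i : Fin p => (i : ℕ) < q)
            = Finset.univ.map ⟨Fin.castLE hq, Fin.castLE_injective hq⟩ from ?_]
        · rw [Finset.sum_map]
          rfl
        · ext i
          simp only [Finset.mem_filter, Finset.mem_univ, true_and, Finset.mem_map,
            Function.Embedding.coeFn_mk]
          constructor
          · intro hi
            exact ⟨⟨i, hi⟩, rfl⟩
          · rintro ⟨j, rfl⟩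
            exact j.isLt
      linarith [hbound, le_of_eq heq]
    linarith
end

section
/- Let X₁,…,Xₙ ∈ ℝ^p, X̄ := (1/n) Σᵢ Xᵢ, and S := (1/n) Σᵢ (Xᵢ − X̄)(Xᵢ − X̄)ᵀ. Let u₁,…,u_q ∈ ℝ^p be orthonormal eigenvectors of S with S uⱼ = λⱼ uⱼ, where λ₁ ≥ … ≥ λ_q are the q largest eigenvalues of S (counted with multiplicity), and let B* := [u₁ … u_q] be the p×q matrix with these columns. Then B* maximizes the PCA criterion: for every real p×q matrix B with BᵀB = I_q, Σᵢ₌₁ⁿ (Xᵢ − X̄)ᵀ B Bᵀ (Xᵢ − X̄) ≤ Σᵢ₌₁ⁿ (Xᵢ − X̄)ᵀ B* B*ᵀ (Xᵢ − X̄), and the maximal value equals n(λ₁ + … + λ_q). -/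
open Matrix

lemma pca_filter_range (p q : ℕ) (hq : q ≤ p) :
    (Finset.range p).filter (· < q) = Finset.range q := by
  ext i; simp; omega

lemma pca_kyfan_abstract (p q : ℕ) (hq : q ≤ p) (lam c : Fin p → ℝ)
    (hmono : ∀ i j : Fin p, i ≤ j → lam j ≤ lam i)
    (hc0 : ∀ k, 0 ≤ c k) (hc1 : ∀ k, c k ≤ 1) (hsum : ∑ k, c k = q) :
    ∑ k, lam k * c k ≤ ∑ j : Fin q, lam (Fin.castLE hq j) := by
  rcases Nat.eq_zero_or_pos p with hp | hp
  · subst hp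
    interval_cases q
    simp
  set d : Fin p → ℝ := fun k => if (k : ℕ) < q then 1 else 0 with hd
  have hm : min q (p - 1) < p := by omega
  set t : ℝ := lam ⟨min q (p - 1), hm⟩ with ht
  have hdsum : ∑ k, d k = q := by
    rw [Fin.sum_univ_eq_sum_range (fun i => if i < q then (1:ℝ) else 0) p,
      ← Finset.sum_filter, pca_filter_range p q hq]
    simp
  have hld : ∑ k, lam k * d k = ∑ j : Fin q, lam (Fin.castLE hq j) := by
    have h1 : ∑ k, lam k * d k
        = ∑ i ∈ Finset.range p, (if i < q then (if h : i < p then lam ⟨i, h⟩ else 0) else 0) := by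
      rw [← Fin.sum_univ_eq_sum_range]
      refine Finset.sum_congr rfl fun k _ => ?_
      simp [hd, k.isLt]
    rw [h1, ← Finset.sum_filter, pca_filter_range p q hq,
      ← Fin.sum_univ_eq_sum_range (fun i => if h : i < p then lam ⟨i, h⟩ else 0) q]
    refine Finset.sum_congr rfl fun j _ => ?_
    have : (j : ℕ) < p := lt_of_lt_of_le j.isLt hq
    simp [this, Fin.castLE]
  have key : ∑ k, (lam k - t) * (c k - d k) ≤ 0 := by
    refine Finset.sum_nonpos fun k _ => ?_
    by_cases hk : (k : ℕ) < q
    · have h1 : t ≤ lam k := by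
        refine hmono k ⟨min q (p - 1), hm⟩ ?_
        simp [Fin.le_def]; omega
      have h2 : c k - d k ≤ 0 := by simp [hd, hk]; linarith [hc1 k]
      exact mul_nonpos_of_nonneg_of_nonpos (by linarith) h2
    · have h1 : lam k ≤ t := by
        refine hmono ⟨min q (p - 1), hm⟩ k ?_
        simp [Fin.le_def]; omega
      have h2 : 0 ≤ c k - d k := by simp [hd, hk]; exact hc0 k
      exact mul_nonpos_of_nonpos_of_nonneg (by linarith) h2
  have expand : ∑ k, (lam k - t) * (c k - d k)
      = ∑ k, lam k * c k - ∑ k, lam k * d k - t * (∑ k, c k) + t * (∑ k, d k) := by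
    rw [Finset.mul_sum, Finset.mul_sum, ← Finset.sum_sub_distrib, ← Finset.sum_sub_distrib,
      ← Finset.sum_add_distrib]
    exact Finset.sum_congr rfl fun k _ => by ring
  rw [expand, hsum, hdsum] at key
  linarith [key, hld.le, hld.ge]

lemma pca_sum_eq_trace (p q n : ℕ) (S : Matrix (Fin p) (Fin p) ℝ) (v : Fin n → Fin p → ℝ)
    (B : Matrix (Fin p) (Fin q) ℝ)
    (hT : ∑ i, Matrix.vecMulVec (v i) (v i) = (n : ℝ) • S) :
    ∑ i, (v i) ⬝ᵥ ((B * Bᵀ) *ᵥ (v i)) = n * Matrix.trace (Bᵀ * S * B) := by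
  have h1 : ∀ i, (v i) ⬝ᵥ ((B * Bᵀ) *ᵥ (v i))
      = Matrix.trace ((B * Bᵀ) * Matrix.vecMulVec (v i) (v i)) := by
    intro i
    simp only [Matrix.trace, Matrix.diag, Matrix.mul_apply, Matrix.vecMulVec_apply,
      dotProduct, Matrix.mulVec, Finset.mul_sum]
    rw [Finset.sum_comm]
    refine Finset.sum_congr rfl fun a _ => Finset.sum_congr rfl fun b _ => ?_
    simp only [Matrix.transpose_apply]
    rw [show ∑ x, B b x * B a x = ∑ x, B a x * B b x from
      Finset.sum_congr rfl fun x _ => mul_comm _ _]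
    ring
  simp only [h1]
  rw [← Matrix.trace_sum]
  have h2 : ∑ i, (B * Bᵀ) * Matrix.vecMulVec (v i) (v i) = (B * Bᵀ) * ((n:ℝ) • S) := by
    rw [← Finset.mul_sum, hT]
  rw [h2, Matrix.mul_smul, Matrix.trace_smul, Matrix.trace_mul_cycle,
    Matrix.trace_mul_cycle, smul_eq_mul]

lemma pca_kyfan_trace (p q : ℕ) (hq : q ≤ p) (S : Matrix (Fin p) (Fin p) ℝ)
    (hS : S.IsHermitian)
    (hmono : ∀ i j : Fin p, i ≤ j → hS.eigenvalues j ≤ hS.eigenvalues i)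
    (B : Matrix (Fin p) (Fin q) ℝ) (hB : Bᵀ * B = 1) :
    Matrix.trace (Bᵀ * S * B) ≤ ∑ j : Fin q, hS.eigenvalues (Fin.castLE hq j) := by
  set U : Matrix (Fin p) (Fin p) ℝ := (hS.eigenvectorUnitary : Matrix (Fin p) (Fin p) ℝ) with hU
  have hstarU : star U = Uᵀ := by
    ext i j; simp [Matrix.star_apply]
  have hUU : U * Uᵀ = 1 := by
    rw [← hstarU]
    exact (Matrix.mem_unitaryGroup_iff).mp hS.eigenvectorUnitary.2
  set lam : Fin p → ℝ := hS.eigenvalues with hlam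
  have hDiag : Matrix.diagonal (RCLike.ofReal ∘ lam) = Matrix.diagonal lam := by
    congr 1
  have hspec : S = U * Matrix.diagonal lam * Uᵀ := by
    rw [← hDiag, ← hstarU]
    exact hS.spectral_theorem
  set M : Matrix (Fin p) (Fin q) ℝ := Uᵀ * B with hMdef
  have hMT : Mᵀ = Bᵀ * U := by
    rw [hMdef, Matrix.transpose_mul, Matrix.transpose_transpose]
  have hM : Mᵀ * M = 1 := by
    rw [hMT, hMdef, Matrix.mul_assoc, ← Matrix.mul_assoc U Uᵀ B, hUU, Matrix.one_mul, hB]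
  have htr : Bᵀ * S * B = Mᵀ * Matrix.diagonal lam * M := by
    rw [hspec, hMT, hMdef]
    simp only [Matrix.mul_assoc]
  set c : Fin p → ℝ := fun k => ∑ j, M k j * M k j with hc
  set P : Matrix (Fin p) (Fin p) ℝ := M * Mᵀ with hP
  have hPsym : ∀ a b, P a b = P b a := fun a b => by
    simp only [hP, Matrix.mul_apply, Matrix.transpose_apply]
    exact Finset.sum_congr rfl fun x _ => mul_comm _ _
  have hPP : P * P = P := by
    rw [hP, Matrix.mul_assoc, ← Matrix.mul_assoc Mᵀ M Mᵀ, hM, Matrix.one_mul]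
  have hPkk : ∀ k, P k k = c k := by
    intro k; simp [hP, Matrix.mul_apply, hc]
  have htrace : Matrix.trace (Bᵀ * S * B) = ∑ k, lam k * c k := by
    rw [htr, Matrix.trace_mul_cycle, Matrix.trace_mul_cycle, Matrix.mul_assoc, ← hP]
    simp only [Matrix.trace, Matrix.diag, Matrix.diagonal_mul]
    exact Finset.sum_congr rfl fun k _ => by rw [hPkk]
  have hc0 : ∀ k, 0 ≤ c k := fun k => Finset.sum_nonneg fun j _ => mul_self_nonneg _
  have hc1 : ∀ k, c k ≤ 1 := by
    intro k
    have h1 : P k k = ∑ j, P k j * P k j := by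
      conv_lhs => rw [← hPP]
      simp only [Matrix.mul_apply]
      refine Finset.sum_congr rfl fun j _ => ?_
      rw [hPsym j k]
    have h2 : P k k * P k k ≤ ∑ j, P k j * P k j :=
      Finset.single_le_sum (f := fun j => P k j * P k j)
        (fun j _ => mul_self_nonneg _) (Finset.mem_univ k)
    have h3 : 0 ≤ c k := hc0 k
    rw [hPkk] at h1 h2
    nlinarith [h1, h2, h3]
  have hsum : ∑ k, c k = q := by
    have h1 : ∑ j : Fin q, ∑ k, M k j * M k j = q := by
      have h2 := congrArg Matrix.trace hM
      rw [Matrix.trace_one] at h2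
      simp only [Fintype.card_fin] at h2
      rw [← h2]
      simp [Matrix.trace, Matrix.mul_apply]
    rw [show ∑ k, c k = ∑ j, ∑ k, M k j * M k j from Finset.sum_comm, h1]
  rw [htrace]
  exact pca_kyfan_abstract p q hq lam c hmono hc0 hc1 hsum

lemma pca_bstar_trace (p q : ℕ) (hq : q ≤ p) (S : Matrix (Fin p) (Fin p) ℝ)
    (hS : S.IsHermitian) (u : Fin q → Fin p → ℝ)
    (horth : ∀ j k : Fin q, u j ⬝ᵥ u k = if j = k then (1 : ℝ) else 0)
    (heig : ∀ j : Fin q, S *ᵥ u j = hS.eigenvalues (Fin.castLE hq j) • u j)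
    (Bstar : Matrix (Fin p) (Fin q) ℝ) (hBstar : Bstar = Matrix.of fun i j => u j i) :
    Matrix.trace (Bstarᵀ * S * Bstar) = ∑ j : Fin q, hS.eigenvalues (Fin.castLE hq j) := by
  have h1 : ∀ j : Fin q, u j ⬝ᵥ (S *ᵥ u j) = hS.eigenvalues (Fin.castLE hq j) := by
    intro j
    rw [heig j, dotProduct_smul, horth, smul_eq_mul, if_pos rfl, mul_one]
  calc Matrix.trace (Bstarᵀ * S * Bstar)
      = ∑ j : Fin q, u j ⬝ᵥ (S *ᵥ u j) := by
        rw [Matrix.mul_assoc]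
        simp only [Matrix.trace, Matrix.diag, Matrix.mul_apply, Matrix.transpose_apply,
          hBstar, Matrix.of_apply, dotProduct, Matrix.mulVec]
    _ = ∑ j : Fin q, hS.eigenvalues (Fin.castLE hq j) :=
        Finset.sum_congr rfl fun j _ => h1 j

/-- The matrix of leading orthonormal eigenvectors of the sample covariance matrix
maximizes the PCA criterion `Σᵢ (Xᵢ − X̄)ᵀ B Bᵀ (Xᵢ − X̄)` over matrices `B` with
orthonormal columns, and the maximal value is `n(λ₁ + ⋯ + λ_q)`. -/
theorem stmt14 (n p q : ℕ) (hn : 1 ≤ n) (hq : q ≤ p) (X : Fin n → Fin p → ℝ)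
    (Xbar : Fin p → ℝ) (hXbar : Xbar = (n : ℝ)⁻¹ • ∑ i, X i)
    (S : Matrix (Fin p) (Fin p) ℝ)
    (hSdef : S = (n : ℝ)⁻¹ • ∑ i, Matrix.vecMulVec (X i - Xbar) (X i - Xbar))
    (hS : S.IsHermitian)
    (hmono : ∀ i j : Fin p, i ≤ j → hS.eigenvalues j ≤ hS.eigenvalues i)
    (u : Fin q → Fin p → ℝ)
    (horth : ∀ j k : Fin q, u j ⬝ᵥ u k = if j = k then (1 : ℝ) else 0)
    (heig : ∀ j : Fin q, S *ᵥ u j = hS.eigenvalues (Fin.castLE hq j) • u j)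
    (Bstar : Matrix (Fin p) (Fin q) ℝ) (hBstar : Bstar = Matrix.of fun i j => u j i) :
    (∀ B : Matrix (Fin p) (Fin q) ℝ, Bᵀ * B = 1 →
        ∑ i, (X i - Xbar) ⬝ᵥ ((B * Bᵀ) *ᵥ (X i - Xbar)) ≤
          ∑ i, (X i - Xbar) ⬝ᵥ ((Bstar * Bstarᵀ) *ᵥ (X i - Xbar))) ∧
      ∑ i, (X i - Xbar) ⬝ᵥ ((Bstar * Bstarᵀ) *ᵥ (X i - Xbar)) =
        n * ∑ j : Fin q, hS.eigenvalues (Fin.castLE hq j) := by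
  have hn0 : (n : ℝ) ≠ 0 := Nat.cast_ne_zero.mpr (by omega)
  have hT : ∑ i, Matrix.vecMulVec (X i - Xbar) (X i - Xbar) = (n : ℝ) • S := by
    rw [hSdef, smul_smul, mul_inv_cancel₀ hn0, one_smul]
  have hEq : ∀ B : Matrix (Fin p) (Fin q) ℝ,
      ∑ i, (X i - Xbar) ⬝ᵥ ((B * Bᵀ) *ᵥ (X i - Xbar)) = n * Matrix.trace (Bᵀ * S * B) :=
    fun B => pca_sum_eq_trace p q n S (fun i => X i - Xbar) B hT
  have hBval := pca_bstar_trace p q hq S hS u horth heig Bstar hBstar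
  constructor
  · intro B hB
    rw [hEq B, hEq Bstar, hBval]
    exact mul_le_mul_of_nonneg_left (pca_kyfan_trace p q hq S hS hmono B hB)
      (Nat.cast_nonneg n)
  · rw [hEq Bstar, hBval]
end

section
/- Let X₁,…,Xₙ be 3-tensors of size p₁×p₂×p₃, let X̄ := (1/n) Σᵢ Xᵢ be their mean, and let U_k be real p_k×q_k matrices with U_kᵀU_k = I_{q_k} (k = 1,2,3). Define Zᵢ := (Xᵢ − X̄) ×₁ U₁ᵀ ×₂ U₂ᵀ ×₃ U₃ᵀ and X̃ᵢ := Zᵢ ×₁ U₁ ×₂ U₂ ×₃ U₃ + X̄. Then Σᵢ₌₁ⁿ ‖Xᵢ − X̃ᵢ‖²_F = Σᵢ₌₁ⁿ ‖Xᵢ − X̄‖²_F − Σᵢ₌₁ⁿ ‖Zᵢ‖²_F; in particular, maximizing Σᵢ ‖Zᵢ‖²_F over the orthogonal matrices U₁, U₂, U₃ is equivalent to minimizing the reconstruction error Σᵢ ‖Xᵢ − X̃ᵢ‖²_F. -/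
open Matrix

/-- Mode-1 product of a 3-tensor with a matrix. -/
def mode1 {p₁ p₂ p₃ q : ℕ} (A : Matrix (Fin q) (Fin p₁) ℝ)
    (X : Fin p₁ × Fin p₂ × Fin p₃ → ℝ) : Fin q × Fin p₂ × Fin p₃ → ℝ :=
  fun t => ∑ i₁, A t.1 i₁ * X (i₁, t.2.1, t.2.2)

/-- Mode-2 product of a 3-tensor with a matrix. -/
def mode2 {p₁ p₂ p₃ q : ℕ} (A : Matrix (Fin q) (Fin p₂) ℝ)
    (X : Fin p₁ × Fin p₂ × Fin p₃ → ℝ) : Fin p₁ × Fin q × Fin p₃ → ℝ :=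
  fun t => ∑ i₂, A t.2.1 i₂ * X (t.1, i₂, t.2.2)

/-- Mode-3 product of a 3-tensor with a matrix. -/
def mode3 {p₁ p₂ p₃ q : ℕ} (A : Matrix (Fin q) (Fin p₃) ℝ)
    (X : Fin p₁ × Fin p₂ × Fin p₃ → ℝ) : Fin p₁ × Fin p₂ × Fin q → ℝ :=
  fun t => ∑ i₃, A t.2.2 i₃ * X (t.1, t.2.1, i₃)

/-- Squared Frobenius norm of a 3-tensor. -/
def frobSq {a b c : ℕ} (X : Fin a × Fin b × Fin c → ℝ) : ℝ :=
  ∑ t, (X t) ^ 2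

lemma key_sum {p q : ℕ} (A : Matrix (Fin q) (Fin p) ℝ) (h : Aᵀ * A = 1) (f : Fin p → ℝ) :
    ∑ j, (∑ i, A j i * f i) ^ 2 = ∑ i, (f i) ^ 2 := by
  have e : ∀ j, (∑ i, A j i * f i) ^ 2 = ∑ a, ∑ b, A j a * f a * (A j b * f b) := by
    intro j; rw [sq, Finset.sum_mul_sum]
  simp_rw [e]
  rw [Finset.sum_comm]
  have e2 : ∀ a, ∑ j, ∑ b, A j a * f a * (A j b * f b)
      = ∑ b, (∑ j, Aᵀ a j * A j b) * (f a * f b) := by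
    intro a
    rw [Finset.sum_comm]
    congr 1; ext b
    rw [Finset.sum_mul]
    congr 1; ext j
    simp [Matrix.transpose_apply]; ring
  simp_rw [e2]
  have e3 : ∀ a b, (∑ j, Aᵀ a j * A j b) = (1 : Matrix (Fin p) (Fin p) ℝ) a b := by
    intro a b; rw [← h]; rfl
  simp_rw [e3]
  simp [Matrix.one_apply, sq]

lemma adj_sum {p q : ℕ} (A : Matrix (Fin q) (Fin p) ℝ) (g : Fin q → ℝ) (f : Fin p → ℝ) :
    ∑ j, g j * (∑ i, A j i * f i) = ∑ i, (∑ j, Aᵀ i j * g j) * f i := by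
  simp_rw [Finset.mul_sum, Finset.sum_mul]
  rw [Finset.sum_comm]
  congr 1; ext i; congr 1; ext j
  simp [Matrix.transpose_apply]; ring

lemma frob_mode1 {p p₂ p₃ q : ℕ} (A : Matrix (Fin q) (Fin p) ℝ) (h : Aᵀ * A = 1)
    (W : Fin p × Fin p₂ × Fin p₃ → ℝ) : frobSq (mode1 A W) = frobSq W := by
  unfold frobSq mode1
  calc ∑ t : Fin q × Fin p₂ × Fin p₃, (∑ i, A t.1 i * W (i, t.2.1, t.2.2)) ^ 2
      = ∑ j : Fin q, ∑ y : Fin p₂ × Fin p₃, (∑ i, A j i * W (i, y.1, y.2)) ^ 2 := by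
        rw [Fintype.sum_prod_type]
    _ = ∑ y : Fin p₂ × Fin p₃, ∑ j : Fin q, (∑ i, A j i * W (i, y.1, y.2)) ^ 2 :=
        Finset.sum_comm
    _ = ∑ y : Fin p₂ × Fin p₃, ∑ i, (W (i, y.1, y.2)) ^ 2 :=
        Finset.sum_congr rfl fun y _ => key_sum A h _
    _ = ∑ i, ∑ y : Fin p₂ × Fin p₃, (W (i, y.1, y.2)) ^ 2 := Finset.sum_comm
    _ = ∑ t : Fin p × Fin p₂ × Fin p₃, (W t) ^ 2 := by rw [Fintype.sum_prod_type]

lemma frob_mode2 {p₁ p p₃ q : ℕ} (A : Matrix (Fin q) (Fin p) ℝ) (h : Aᵀ * A = 1)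
    (W : Fin p₁ × Fin p × Fin p₃ → ℝ) : frobSq (mode2 A W) = frobSq W := by
  unfold frobSq mode2
  simp_rw [Fintype.sum_prod_type]
  refine Finset.sum_congr rfl fun x _ => ?_
  calc ∑ j : Fin q, ∑ z : Fin p₃, (∑ i, A j i * W (x, i, z)) ^ 2
      = ∑ z : Fin p₃, ∑ j : Fin q, (∑ i, A j i * W (x, i, z)) ^ 2 := Finset.sum_comm
    _ = ∑ z : Fin p₃, ∑ i, (W (x, i, z)) ^ 2 :=
        Finset.sum_congr rfl fun z _ => key_sum A h _
    _ = ∑ i, ∑ z : Fin p₃, (W (x, i, z)) ^ 2 := Finset.sum_comm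

lemma frob_mode3 {p₁ p₂ p q : ℕ} (A : Matrix (Fin q) (Fin p) ℝ) (h : Aᵀ * A = 1)
    (W : Fin p₁ × Fin p₂ × Fin p → ℝ) : frobSq (mode3 A W) = frobSq W := by
  unfold frobSq mode3
  simp_rw [Fintype.sum_prod_type]
  exact Finset.sum_congr rfl fun x _ => Finset.sum_congr rfl fun y _ => key_sum A h _

lemma adj_mode1 {p p₂ p₃ q : ℕ} (A : Matrix (Fin q) (Fin p) ℝ)
    (g : Fin q × Fin p₂ × Fin p₃ → ℝ) (f : Fin p × Fin p₂ × Fin p₃ → ℝ) :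
    ∑ t, g t * mode1 A f t = ∑ s, mode1 Aᵀ g s * f s := by
  unfold mode1
  calc ∑ t : Fin q × Fin p₂ × Fin p₃, g t * ∑ i, A t.1 i * f (i, t.2.1, t.2.2)
      = ∑ j : Fin q, ∑ y : Fin p₂ × Fin p₃, g (j, y.1, y.2) * ∑ i, A j i * f (i, y.1, y.2) := by
        rw [Fintype.sum_prod_type]
    _ = ∑ y : Fin p₂ × Fin p₃, ∑ j : Fin q, g (j, y.1, y.2) * ∑ i, A j i * f (i, y.1, y.2) :=
        Finset.sum_comm
    _ = ∑ y : Fin p₂ × Fin p₃, ∑ i, (∑ j, Aᵀ i j * g (j, y.1, y.2)) * f (i, y.1, y.2) :=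
        Finset.sum_congr rfl fun y _ => adj_sum A _ _
    _ = ∑ i, ∑ y : Fin p₂ × Fin p₃, (∑ j, Aᵀ i j * g (j, y.1, y.2)) * f (i, y.1, y.2) :=
        Finset.sum_comm
    _ = ∑ s : Fin p × Fin p₂ × Fin p₃, (∑ j, Aᵀ s.1 j * g (j, s.2.1, s.2.2)) * f s := by
        rw [Fintype.sum_prod_type]

lemma adj_mode2 {p₁ p p₃ q : ℕ} (A : Matrix (Fin q) (Fin p) ℝ)
    (g : Fin p₁ × Fin q × Fin p₃ → ℝ) (f : Fin p₁ × Fin p × Fin p₃ → ℝ) :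
    ∑ t, g t * mode2 A f t = ∑ s, mode2 Aᵀ g s * f s := by
  unfold mode2
  simp only [Fintype.sum_prod_type]
  refine Finset.sum_congr rfl fun x _ => ?_
  calc ∑ j : Fin q, ∑ z : Fin p₃, g (x, j, z) * ∑ i, A j i * f (x, i, z)
      = ∑ z : Fin p₃, ∑ j : Fin q, g (x, j, z) * ∑ i, A j i * f (x, i, z) := Finset.sum_comm
    _ = ∑ z : Fin p₃, ∑ i, (∑ j, Aᵀ i j * g (x, j, z)) * f (x, i, z) :=
        Finset.sum_congr rfl fun z _ => adj_sum A _ _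
    _ = ∑ i, ∑ z : Fin p₃, (∑ j, Aᵀ i j * g (x, j, z)) * f (x, i, z) := Finset.sum_comm

lemma adj_mode3 {p₁ p₂ p q : ℕ} (A : Matrix (Fin q) (Fin p) ℝ)
    (g : Fin p₁ × Fin p₂ × Fin q → ℝ) (f : Fin p₁ × Fin p₂ × Fin p → ℝ) :
    ∑ t, g t * mode3 A f t = ∑ s, mode3 Aᵀ g s * f s := by
  unfold mode3
  simp only [Fintype.sum_prod_type]
  exact Finset.sum_congr rfl fun x _ => Finset.sum_congr rfl fun y _ =>
    adj_sum A (fun j => g (x, y, j)) (fun i => f (x, y, i))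

lemma comm12 {p₁ p₂ p₃ q₁ q₂ : ℕ} (A : Matrix (Fin q₁) (Fin p₁) ℝ)
    (B : Matrix (Fin q₂) (Fin p₂) ℝ) (f : Fin p₁ × Fin p₂ × Fin p₃ → ℝ) :
    mode1 A (mode2 B f) = mode2 B (mode1 A f) := by
  funext t
  simp only [mode1, mode2, Finset.mul_sum]
  rw [Finset.sum_comm]
  congr 1; ext a; congr 1; ext b; ring

lemma comm13 {p₁ p₂ p₃ q₁ q₃ : ℕ} (A : Matrix (Fin q₁) (Fin p₁) ℝ)
    (B : Matrix (Fin q₃) (Fin p₃) ℝ) (f : Fin p₁ × Fin p₂ × Fin p₃ → ℝ) :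
    mode1 A (mode3 B f) = mode3 B (mode1 A f) := by
  funext t
  simp only [mode1, mode3, Finset.mul_sum]
  rw [Finset.sum_comm]
  congr 1; ext a; congr 1; ext b; ring

lemma comm23 {p₁ p₂ p₃ q₂ q₃ : ℕ} (A : Matrix (Fin q₂) (Fin p₂) ℝ)
    (B : Matrix (Fin q₃) (Fin p₃) ℝ) (f : Fin p₁ × Fin p₂ × Fin p₃ → ℝ) :
    mode2 A (mode3 B f) = mode3 B (mode2 A f) := by
  funext t
  simp only [mode2, mode3, Finset.mul_sum]
  rw [Finset.sum_comm]
  congr 1; ext a; congr 1; ext b; ring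

lemma key_identity {p₁ p₂ p₃ q₁ q₂ q₃ : ℕ}
    (U₁ : Matrix (Fin p₁) (Fin q₁) ℝ) (U₂ : Matrix (Fin p₂) (Fin q₂) ℝ)
    (U₃ : Matrix (Fin p₃) (Fin q₃) ℝ)
    (hU₁ : U₁ᵀ * U₁ = 1) (hU₂ : U₂ᵀ * U₂ = 1) (hU₃ : U₃ᵀ * U₃ = 1)
    (Y : Fin p₁ × Fin p₂ × Fin p₃ → ℝ) :
    frobSq (Y - mode3 U₃ (mode2 U₂ (mode1 U₁ (mode3 U₃ᵀ (mode2 U₂ᵀ (mode1 U₁ᵀ Y))))))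
      = frobSq Y - frobSq (mode3 U₃ᵀ (mode2 U₂ᵀ (mode1 U₁ᵀ Y))) := by
  set Zt := mode3 U₃ᵀ (mode2 U₂ᵀ (mode1 U₁ᵀ Y)) with hZt
  set D := mode3 U₃ (mode2 U₂ (mode1 U₁ Zt)) with hD
  have hnorm : frobSq D = frobSq Zt := by
    rw [hD, frob_mode3 U₃ hU₃, frob_mode2 U₂ hU₂, frob_mode1 U₁ hU₁]
  have hinner : ∑ t, Y t * D t = frobSq Zt := by
    rw [hD, adj_mode3, adj_mode2, adj_mode1]
    have e : mode1 U₁ᵀ (mode2 U₂ᵀ (mode3 U₃ᵀ Y)) = Zt := by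
      rw [hZt, comm12, comm13, comm23]
    rw [e, frobSq]
    exact Finset.sum_congr rfl fun s _ => (sq (Zt s)).symm
  have expand : frobSq (Y - D) = frobSq Y - 2 * (∑ t, Y t * D t) + frobSq D := by
    unfold frobSq
    rw [Finset.mul_sum, ← Finset.sum_sub_distrib, ← Finset.sum_add_distrib]
    refine Finset.sum_congr rfl fun t _ => ?_
    simp only [Pi.sub_apply]; ring
  rw [expand, hnorm, hinner]; ring

lemma per_sample {n p₁ p₂ p₃ q₁ q₂ q₃ : ℕ}
    (X : Fin n → (Fin p₁ × Fin p₂ × Fin p₃ → ℝ))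
    (Xbar : Fin p₁ × Fin p₂ × Fin p₃ → ℝ)
    (U₁ : Matrix (Fin p₁) (Fin q₁) ℝ) (U₂ : Matrix (Fin p₂) (Fin q₂) ℝ)
    (U₃ : Matrix (Fin p₃) (Fin q₃) ℝ)
    (hU₁ : U₁ᵀ * U₁ = 1) (hU₂ : U₂ᵀ * U₂ = 1) (hU₃ : U₃ᵀ * U₃ = 1)
    (Z : Fin n → (Fin q₁ × Fin q₂ × Fin q₃ → ℝ))
    (hZ : ∀ i, Z i = mode3 U₃ᵀ (mode2 U₂ᵀ (mode1 U₁ᵀ (X i - Xbar))))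
    (Xt : Fin n → (Fin p₁ × Fin p₂ × Fin p₃ → ℝ))
    (hXt : ∀ i, Xt i = mode3 U₃ (mode2 U₂ (mode1 U₁ (Z i))) + Xbar) :
    ∑ i, frobSq (X i - Xt i) = ∑ i, frobSq (X i - Xbar) - ∑ i, frobSq (Z i) := by
  rw [← Finset.sum_sub_distrib]
  refine Finset.sum_congr rfl fun i _ => ?_
  rw [hXt i, hZ i]
  have e : X i - (mode3 U₃ (mode2 U₂ (mode1 U₁
        (mode3 U₃ᵀ (mode2 U₂ᵀ (mode1 U₁ᵀ (X i - Xbar)))))) + Xbar)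
      = (X i - Xbar) - mode3 U₃ (mode2 U₂ (mode1 U₁
        (mode3 U₃ᵀ (mode2 U₂ᵀ (mode1 U₁ᵀ (X i - Xbar)))))) := by
    funext t; simp only [Pi.sub_apply, Pi.add_apply]; ring
  rw [e, key_identity U₁ U₂ U₃ hU₁ hU₂ hU₃]

/-- The MPCA identity `Σᵢ ‖Xᵢ − X̃ᵢ‖²_F = Σᵢ ‖Xᵢ − X̄‖²_F − Σᵢ ‖Zᵢ‖²_F`, where
`Zᵢ := (Xᵢ − X̄) ×₁ U₁ᵀ ×₂ U₂ᵀ ×₃ U₃ᵀ` and `X̃ᵢ := Zᵢ ×₁ U₁ ×₂ U₂ ×₃ U₃ + X̄`; in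
particular, maximizing `Σᵢ ‖Zᵢ‖²_F` over triples of orthogonal matrices is the same
as minimizing the reconstruction error `Σᵢ ‖Xᵢ − X̃ᵢ‖²_F`. -/
theorem stmt15 (n p₁ p₂ p₃ q₁ q₂ q₃ : ℕ)
    (X : Fin n → (Fin p₁ × Fin p₂ × Fin p₃ → ℝ))
    (Xbar : Fin p₁ × Fin p₂ × Fin p₃ → ℝ) (hXbar : Xbar = (n : ℝ)⁻¹ • ∑ i, X i)
    (U₁ : Matrix (Fin p₁) (Fin q₁) ℝ) (U₂ : Matrix (Fin p₂) (Fin q₂) ℝ)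
    (U₃ : Matrix (Fin p₃) (Fin q₃) ℝ)
    (hU₁ : U₁ᵀ * U₁ = 1) (hU₂ : U₂ᵀ * U₂ = 1) (hU₃ : U₃ᵀ * U₃ = 1)
    (Z : Fin n → (Fin q₁ × Fin q₂ × Fin q₃ → ℝ))
    (hZ : ∀ i, Z i = mode3 U₃ᵀ (mode2 U₂ᵀ (mode1 U₁ᵀ (X i - Xbar))))
    (Xt : Fin n → (Fin p₁ × Fin p₂ × Fin p₃ → ℝ))
    (hXt : ∀ i, Xt i = mode3 U₃ (mode2 U₂ (mode1 U₁ (Z i))) + Xbar) :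
    (∑ i, frobSq (X i - Xt i) = ∑ i, frobSq (X i - Xbar) - ∑ i, frobSq (Z i)) ∧
      (∀ (V₁ : Matrix (Fin p₁) (Fin q₁) ℝ) (V₂ : Matrix (Fin p₂) (Fin q₂) ℝ)
          (V₃ : Matrix (Fin p₃) (Fin q₃) ℝ),
        V₁ᵀ * V₁ = 1 → V₂ᵀ * V₂ = 1 → V₃ᵀ * V₃ = 1 →
        ∀ (Z' : Fin n → (Fin q₁ × Fin q₂ × Fin q₃ → ℝ)),
          (∀ i, Z' i = mode3 V₃ᵀ (mode2 V₂ᵀ (mode1 V₁ᵀ (X i - Xbar)))) →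
          ∀ (Xt' : Fin n → (Fin p₁ × Fin p₂ × Fin p₃ → ℝ)),
            (∀ i, Xt' i = mode3 V₃ (mode2 V₂ (mode1 V₁ (Z' i))) + Xbar) →
            ((∑ i, frobSq (Z' i) ≤ ∑ i, frobSq (Z i)) ↔
              (∑ i, frobSq (X i - Xt i) ≤ ∑ i, frobSq (X i - Xt' i)))) := by
  have h1 := per_sample X Xbar U₁ U₂ U₃ hU₁ hU₂ hU₃ Z hZ Xt hXt
  refine ⟨h1, ?_⟩
  intro V₁ V₂ V₃ hV₁ hV₂ hV₃ Z' hZ' Xt' hXt'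
  have h2 := per_sample X Xbar V₁ V₂ V₃ hV₁ hV₂ hV₃ Z' hZ' Xt' hXt'
  rw [h1, h2]
  constructor <;> intro <;> linarith
end
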